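/- Let H be a Hopf algebra over a field k with invertible antipode S, and let H̃ denote H with left H-coaction h ↦ h₍₁₎ ⊗ h₍₂₎ and right H^{op,cop}-coaction h ↦ h₍₁₎ ⊗ S⁻¹(h₍₂₎). Then the multiplication μ : H̃ ⊗ H̃ → H̃ and unit η : k → H̃ of H are morphisms of H-H^{op,cop}-bicomodules, so that H̃ is an algebra object in the category of H-H^{op,cop}-bicomodules. -/

import Mathlib

/- STATEMENT 1: For a Hopf algebra H over a field k with invertible antipode S, the space H̃ = H
with left H-coaction Δ and right H^{op,cop}-coaction h ↦ h₍₁₎ ⊗ S⁻¹(h₍₂₎) is an algebra object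
in H-H^{op,cop}-bicomodules: the multiplication μ and the unit η of H are bicomodule morphisms,
where H̃ ⊗ H̃ carries the diagonal left coaction (with product in H) and the diagonal right
coaction (with product in H^{op}, i.e. opposite order). -/

open TensorProduct

noncomputable section

variable {k : Type} [Field k] {H : Type} [Ring H] [HopfAlgebra k H]
variable {P Q : Type} [AddCommGroup P] [Module k P] [AddCommGroup Q] [Module k Q]

/-- Diagonal left `H`-coaction on a tensor product of two left `H`-comodules:
`p ⊗ q ↦ p₍₋₁₎ q₍₋₁₎ ⊗ p₍₀₎ ⊗ q₍₀₎`. -/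
def lDiag (ρP : P →ₗ[k] H ⊗[k] P) (ρQ : Q →ₗ[k] H ⊗[k] Q) :
    (P ⊗[k] Q) →ₗ[k] H ⊗[k] (P ⊗[k] Q) :=
  (TensorProduct.map (LinearMap.mul' k H) LinearMap.id)
    ∘ₗ (TensorProduct.tensorTensorTensorComm k H P H Q).toLinearMap
    ∘ₗ TensorProduct.map ρP ρQ

/-- Diagonal right `H^{op,cop}`-coaction on a tensor product of two right comodules, using the
opposite multiplication: `p ⊗ q ↦ p₍₀₎ ⊗ q₍₀₎ ⊗ q₍₁₎ p₍₁₎` (product in `H`). -/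
def rDiag (ρP : P →ₗ[k] P ⊗[k] H) (ρQ : Q →ₗ[k] Q ⊗[k] H) :
    (P ⊗[k] Q) →ₗ[k] (P ⊗[k] Q) ⊗[k] H :=
  (TensorProduct.map LinearMap.id ((LinearMap.mul' k H) ∘ₗ (TensorProduct.comm k H H).toLinearMap))
    ∘ₗ (TensorProduct.tensorTensorTensorComm k P H Q H).toLinearMap
    ∘ₗ TensorProduct.map ρP ρQ

open Coalgebra

lemma sum_counit_smul_left {a : H} {ι : Type*} (r : Repr k a ι) :
    ∑ i ∈ r.index, counit (R := k) (r.right i) • r.left i = a := by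
  have := congrArg (TensorProduct.rid k H) (sum_tmul_counit_eq r)
  rw [map_sum] at this
  simp only [TensorProduct.rid_tmul, one_smul] at this
  exact this

lemma sum_counit_smul_right {a : H} {ι : Type*} (r : Repr k a ι) :
    ∑ i ∈ r.index, counit (R := k) (r.left i) • r.right i = a := by
  have := congrArg (TensorProduct.lid k H) (sum_counit_tmul_eq r)
  rw [map_sum] at this
  simp only [TensorProduct.lid_tmul, one_smul] at this
  exact this

lemma antipode_one' : HopfAlgebra.antipode (R := k) (1 : H) = 1 := by
  have := HopfAlgebra.mul_antipode_rTensor_comul_apply (R := k) (1 : H)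
  simp only [Bialgebra.comul_one, Algebra.TensorProduct.one_def, LinearMap.rTensor_tmul, LinearMap.mul'_apply, mul_one,
    Bialgebra.counit_one, map_one] at this
  exact this

/-- product representation -/
def Repr.mul {x y : H} {ι κ : Type*} (rx : Repr k x ι) (ry : Repr k y κ) : Repr k (x * y) (ι × κ) where
  index := rx.index ×ˢ ry.index
  left := fun p => rx.left p.1 * ry.left p.2
  right := fun p => rx.right p.1 * ry.right p.2
  eq := by
    rw [Bialgebra.comul_mul, ← rx.eq, ← ry.eq, Finset.sum_mul_sum, Finset.sum_product]
    simp [Algebra.TensorProduct.tmul_mul_tmul]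

@[simp] lemma Repr.mul_index {x y : H} {ι κ : Type*} (rx : Repr k x ι) (ry : Repr k y κ) :
    (Repr.mul rx ry).index = rx.index ×ˢ ry.index := rfl

@[simp] lemma Repr.mul_left {x y : H} {ι κ : Type*} (rx : Repr k x ι) (ry : Repr k y κ) (p) :
    (Repr.mul rx ry).left p = rx.left p.1 * ry.left p.2 := rfl

@[simp] lemma Repr.mul_right {x y : H} {ι κ : Type*} (rx : Repr k x ι) (ry : Repr k y κ) (p) :
    (Repr.mul rx ry).right p = rx.right p.1 * ry.right p.2 := rfl

lemma coassoc_sum {M : Type} [AddCommGroup M] [Module k M]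
    (g : H ⊗[k] (H ⊗[k] H) →ₗ[k] M) {a : H} {ι κ Λ : Type*} (r : Repr k a ι)
    (r1 : (i : r.ι) → Repr k (r.left i) κ) (r2 : (i : r.ι) → Repr k (r.right i) Λ) :
    ∑ i ∈ r.index, ∑ j ∈ (r1 i).index,
        g ((r1 i).left j ⊗ₜ[k] ((r1 i).right j ⊗ₜ[k] r.right i))
      = ∑ i ∈ r.index, ∑ j ∈ (r2 i).index,
        g (r.left i ⊗ₜ[k] ((r2 i).left j ⊗ₜ[k] (r2 i).right j)) := by
  have := congrArg g (sum_tmul_tmul_eq r r1 r2)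
  simpa only [map_sum] using this

/-- `triple α β γ (x ⊗ (y ⊗ z)) = α x * (β y * γ z)`. -/
def triple (α β γ : H →ₗ[k] H) : H ⊗[k] (H ⊗[k] H) →ₗ[k] H :=
  LinearMap.mul' k H ∘ₗ TensorProduct.map α (LinearMap.mul' k H ∘ₗ TensorProduct.map β γ)

@[simp] lemma triple_apply (α β γ : H →ₗ[k] H) (x y z : H) :
    triple α β γ (x ⊗ₜ[k] (y ⊗ₜ[k] z)) = α x * (β y * γ z) := by
  simp [triple]

open HopfAlgebra in
lemma antipode_mul' (a b : H) :
    antipode (R := k) (a * b) = antipode (R := k) b * antipode (R := k) a := by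
  let S : H →ₗ[k] H := antipode (R := k)
  let ε : H →ₗ[k] k := counit (R := k)
  show S (a * b) = S b * S a
  let ra := ℛ k a
  let rb := ℛ k b
  let ra1 : (i : ra.ι) → Repr k (ra.left i) (H × H) := fun i => ℛ k (ra.left i)
  let ra2 : (i : ra.ι) → Repr k (ra.right i) (H × H) := fun i => ℛ k (ra.right i)
  let rb1 : (j : rb.ι) → Repr k (rb.left j) (H × H) := fun j => ℛ k (rb.left j)
  let rb2 : (j : rb.ι) → Repr k (rb.right j) (H × H) := fun j => ℛ k (rb.right j)
  calc
    S (a * b)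
        = ∑ i ∈ ra.index, ∑ j ∈ rb.index,
            ε (ra.right i) • (ε (rb.right j) • S (ra.left i * rb.left j)) := by
          conv_lhs => rw [← sum_counit_smul_left ra, ← sum_counit_smul_left rb]
          rw [Finset.sum_mul_sum, map_sum]
          refine Finset.sum_congr rfl fun i _ => ?_
          rw [map_sum]
          refine Finset.sum_congr rfl fun j _ => ?_
          rw [smul_mul_assoc, mul_smul_comm, map_smul, map_smul]
    _ = ∑ i ∈ ra.index, ∑ j ∈ rb.index, ∑ q ∈ (ra2 i).index, ∑ p ∈ (rb2 j).index,
            S (ra.left i * rb.left j) *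
              (((ra2 i).left q * (rb2 j).left p) *
                (S ((rb2 j).right p) * S ((ra2 i).right q))) := by
          refine Finset.sum_congr rfl fun i _ => Finset.sum_congr rfl fun j _ => ?_
          symm
          calc
            ∑ q ∈ (ra2 i).index, ∑ p ∈ (rb2 j).index,
                S (ra.left i * rb.left j) *
                  (((ra2 i).left q * (rb2 j).left p) *
                    (S ((rb2 j).right p) * S ((ra2 i).right q)))
              = ∑ q ∈ (ra2 i).index,
                  (S (ra.left i * rb.left j) * (ra2 i).left q) *
                    ((∑ p ∈ (rb2 j).index, (rb2 j).left p * S ((rb2 j).right p)) *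
                      S ((ra2 i).right q)) := by
                refine Finset.sum_congr rfl fun q _ => ?_
                rw [Finset.sum_mul, Finset.mul_sum]
                exact Finset.sum_congr rfl fun p _ => by simp only [mul_assoc]
            _ = ∑ q ∈ (ra2 i).index,
                  ε (rb.right j) •
                    ((S (ra.left i * rb.left j) * (ra2 i).left q) * S ((ra2 i).right q)) := by
                rw [HopfAlgebra.sum_mul_antipode_eq_smul (rb2 j)]
                exact Finset.sum_congr rfl fun q _ => by
                  rw [smul_mul_assoc, one_mul, mul_smul_comm]
            _ = ε (rb.right j) •
                  (S (ra.left i * rb.left j) *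
                    ∑ q ∈ (ra2 i).index, (ra2 i).left q * S ((ra2 i).right q)) := by
                rw [← Finset.smul_sum, Finset.mul_sum]
                refine congrArg _ (Finset.sum_congr rfl fun q _ => by rw [mul_assoc])
            _ = ε (ra.right i) • (ε (rb.right j) • S (ra.left i * rb.left j)) := by
                rw [HopfAlgebra.sum_mul_antipode_eq_smul (ra2 i), mul_smul_comm, mul_one]
                rw [smul_comm]
    _ = ∑ i ∈ ra.index, ∑ q ∈ (ra2 i).index, ∑ j ∈ rb.index, ∑ p ∈ (rb1 j).index,
            S (ra.left i * (rb1 j).left p) *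
              (((ra2 i).left q * (rb1 j).right p) *
                (S (rb.right j) * S ((ra2 i).right q))) := by
          refine Finset.sum_congr rfl fun i _ => ?_
          rw [Finset.sum_comm]
          refine Finset.sum_congr rfl fun q _ => ?_
          have := coassoc_sum
            (triple (S ∘ₗ LinearMap.mulLeft k (ra.left i))
              (LinearMap.mulLeft k ((ra2 i).left q))
              (LinearMap.mulRight k (S ((ra2 i).right q)) ∘ₗ S)) rb rb1 rb2
          simpa only [triple_apply, LinearMap.comp_apply, LinearMap.mulLeft_apply,
            LinearMap.mulRight_apply] using this.symm
    _ = ∑ i ∈ ra.index, ∑ j ∈ rb.index, ∑ q ∈ (ra2 i).index, ∑ p ∈ (rb1 j).index,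
            S (ra.left i * (rb1 j).left p) *
              (((ra2 i).left q * (rb1 j).right p) *
                (S (rb.right j) * S ((ra2 i).right q))) := by
          exact Finset.sum_congr rfl fun i _ => by rw [Finset.sum_comm]
    _ = ∑ j ∈ rb.index, ∑ i ∈ ra.index, ∑ p ∈ (rb1 j).index, ∑ q ∈ (ra2 i).index,
            S (ra.left i * (rb1 j).left p) *
              (((ra2 i).left q * (rb1 j).right p) *
                (S (rb.right j) * S ((ra2 i).right q))) := by
          rw [Finset.sum_comm]
          exact Finset.sum_congr rfl fun j _ => Finset.sum_congr rfl fun i _ => by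
            rw [Finset.sum_comm]
    _ = ∑ j ∈ rb.index, ∑ p ∈ (rb1 j).index, ∑ i ∈ ra.index, ∑ q ∈ (ra2 i).index,
            S (ra.left i * (rb1 j).left p) *
              (((ra2 i).left q * (rb1 j).right p) *
                (S (rb.right j) * S ((ra2 i).right q))) := by
          exact Finset.sum_congr rfl fun j _ => by rw [Finset.sum_comm]
    _ = ∑ j ∈ rb.index, ∑ p ∈ (rb1 j).index, ∑ i ∈ ra.index, ∑ q ∈ (ra1 i).index,
            S ((ra1 i).left q * (rb1 j).left p) *
              (((ra1 i).right q * (rb1 j).right p) *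
                (S (rb.right j) * S (ra.right i))) := by
          refine Finset.sum_congr rfl fun j _ => Finset.sum_congr rfl fun p _ => ?_
          have := coassoc_sum
            (triple (S ∘ₗ LinearMap.mulRight k ((rb1 j).left p))
              (LinearMap.mulRight k ((rb1 j).right p))
              (LinearMap.mulLeft k (S (rb.right j)) ∘ₗ S)) ra ra1 ra2
          simpa only [triple_apply, LinearMap.comp_apply, LinearMap.mulLeft_apply,
            LinearMap.mulRight_apply] using this.symm
    _ = ∑ j ∈ rb.index, ∑ i ∈ ra.index,
            (ε (ra.left i) * ε (rb.left j)) • (S (rb.right j) * S (ra.right i)) := by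
          refine Finset.sum_congr rfl fun j _ => ?_
          rw [Finset.sum_comm]
          refine Finset.sum_congr rfl fun i _ => ?_
          have hmul := HopfAlgebra.sum_antipode_mul_eq_smul (Repr.mul (ra1 i) (rb1 j))
          simp only [Repr.mul_index, Repr.mul_left, Repr.mul_right,
            Finset.sum_product] at hmul
          calc
            ∑ p ∈ (rb1 j).index, ∑ q ∈ (ra1 i).index,
                S ((ra1 i).left q * (rb1 j).left p) *
                  (((ra1 i).right q * (rb1 j).right p) *
                    (S (rb.right j) * S (ra.right i)))
              = (∑ q ∈ (ra1 i).index, ∑ p ∈ (rb1 j).index,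
                    S ((ra1 i).left q * (rb1 j).left p) *
                      ((ra1 i).right q * (rb1 j).right p)) *
                  (S (rb.right j) * S (ra.right i)) := by
                rw [Finset.sum_comm, Finset.sum_mul]
                refine Finset.sum_congr rfl fun q _ => ?_
                rw [Finset.sum_mul]
                exact Finset.sum_congr rfl fun p _ => by simp only [mul_assoc]
            _ = (ε (ra.left i * rb.left j) • (1 : H)) * (S (rb.right j) * S (ra.right i)) := by
                exact congrArg (· * (S (rb.right j) * S (ra.right i)))
                  hmul
            _ = (ε (ra.left i) * ε (rb.left j)) • (S (rb.right j) * S (ra.right i)) := by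
                rw [smul_mul_assoc, one_mul, Bialgebra.counit_mul]
    _ = S b * S a := by
          conv_rhs =>
            rw [← sum_counit_smul_right rb, ← sum_counit_smul_right ra, map_sum, map_sum,
              Finset.sum_mul_sum]
          refine Finset.sum_congr rfl fun j _ => Finset.sum_congr rfl fun i _ => ?_
          rw [map_smul, map_smul, smul_mul_assoc, mul_smul_comm, mul_smul]
          exact smul_comm _ _ _

set_option synthInstance.maxHeartbeats 1000000 in
set_option maxHeartbeats 2000000 in
theorem Htilde_algebra_in_bicomodules
    (k H : Type) [Field k] [Ring H] [HopfAlgebra k H]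
    (S' : H →ₗ[k] H)
    (hS'₁ : S' ∘ₗ HopfAlgebra.antipode (R := k) = LinearMap.id)
    (hS'₂ : HopfAlgebra.antipode (R := k) ∘ₗ S' = LinearMap.id) :
    -- the multiplication of H is a morphism of left H-comodules
    (Coalgebra.comul (R := k) ∘ₗ LinearMap.mul' k H
      = (TensorProduct.map LinearMap.id (LinearMap.mul' k H)) ∘ₗ
          lDiag (Coalgebra.comul (R := k)) (Coalgebra.comul (R := k)))
    -- the multiplication of H is a morphism of right H^{op,cop}-comodules
    ∧ (((TensorProduct.map LinearMap.id S') ∘ₗ Coalgebra.comul (R := k)) ∘ₗ LinearMap.mul' k H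
      = (TensorProduct.map (LinearMap.mul' k H) LinearMap.id) ∘ₗ
          rDiag ((TensorProduct.map LinearMap.id S') ∘ₗ Coalgebra.comul (R := k))
            ((TensorProduct.map LinearMap.id S') ∘ₗ Coalgebra.comul (R := k)))
    -- the unit of H is a morphism of bicomodules from the trivial bicomodule k
    ∧ (Coalgebra.comul (R := k) (1 : H) = (1 : H) ⊗ₜ[k] (1 : H))
    ∧ (((TensorProduct.map LinearMap.id S') ∘ₗ Coalgebra.comul (R := k)) (1 : H)
        = (1 : H) ⊗ₜ[k] (1 : H)) := by
  have h1 : ∀ z : H, S' (HopfAlgebra.antipode (R := k) z) = z := fun z => by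
    simpa using LinearMap.congr_fun hS'₁ z
  have h2 : ∀ z : H, HopfAlgebra.antipode (R := k) (S' z) = z := fun z => by
    simpa using LinearMap.congr_fun hS'₂ z
  have hS'mul : ∀ x y : H, S' (x * y) = S' y * S' x := by
    intro x y
    have hxy : x * y = HopfAlgebra.antipode (R := k) (S' y * S' x) := by
      rw [antipode_mul', h2, h2]
    rw [hxy, h1]
  have hS'one : S' (1 : H) = 1 := by
    have := h1 1
    rwa [antipode_one'] at this
  refine ⟨?_, ?_, ?_, ?_⟩
  · apply TensorProduct.ext'
    intro a b
    have ra := ℛ k a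
    have rb := ℛ k b
    simp only [LinearMap.comp_apply, lDiag, LinearEquiv.coe_coe, TensorProduct.map_tmul,
      LinearMap.mul'_apply, LinearMap.id_coe, id_eq]
    rw [Bialgebra.comul_mul, ← ra.eq, ← rb.eq, Finset.sum_mul_sum]
    simp [TensorProduct.sum_tmul, TensorProduct.tmul_sum, map_sum,
      TensorProduct.tensorTensorTensorComm_tmul, Algebra.TensorProduct.tmul_mul_tmul]
    rw [Finset.sum_comm]
  · apply TensorProduct.ext'
    intro a b
    have ra := ℛ k a
    have rb := ℛ k b
    simp only [LinearMap.comp_apply, rDiag, LinearEquiv.coe_coe, TensorProduct.map_tmul,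
      LinearMap.mul'_apply, LinearMap.id_coe, id_eq]
    rw [Bialgebra.comul_mul, ← ra.eq, ← rb.eq, Finset.sum_mul_sum]
    simp [TensorProduct.sum_tmul, TensorProduct.tmul_sum, map_sum,
      TensorProduct.tensorTensorTensorComm_tmul, TensorProduct.comm_tmul,
      Algebra.TensorProduct.tmul_mul_tmul, hS'mul]
    rw [Finset.sum_comm]
  · rw [Bialgebra.comul_one]
    simp [Algebra.TensorProduct.one_def]
  · simp [Bialgebra.comul_one, Algebra.TensorProduct.one_def, hS'one]
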